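/- Let (φ, ψ) be an n×n matrix factorization of f and (φ', ψ') an m×m matrix factorization of g. Then the pair of 2nm×2nm anti-diagonal block matrices ( [[0, φ⊗φ'], [φ⊗φ', 0]], [[0, ψ⊗ψ'], [ψ⊗ψ', 0]] ) is a matrix factorization of fg. -/
import Mathlib


open Matrix Kronecker

/-- The variant `⊗̃'` of the multiplicative tensor product: the pair of
anti-diagonal block matrices is a `2nm×2nm` matrix factorization of `fg`. -/
theorem mult_tensor_variant_is_matrix_factorization
    {K : Type*} [Field K] {σ τ : Type*} {n m : ℕ}
    (f g : MvPowerSeries (σ ⊕ τ) K)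
    (φ ψ : Matrix (Fin n) (Fin n) (MvPowerSeries (σ ⊕ τ) K))
    (φ' ψ' : Matrix (Fin m) (Fin m) (MvPowerSeries (σ ⊕ τ) K))
    (h1 : φ * ψ = f • 1) (h2 : ψ * φ = f • 1)
    (h3 : φ' * ψ' = g • 1) (h4 : ψ' * φ' = g • 1) :
    fromBlocks 0 (φ ⊗ₖ φ') (φ ⊗ₖ φ') 0 * fromBlocks 0 (ψ ⊗ₖ ψ') (ψ ⊗ₖ ψ') 0 =
      (f * g) • 1 ∧
    fromBlocks 0 (ψ ⊗ₖ ψ') (ψ ⊗ₖ ψ') 0 * fromBlocks 0 (φ ⊗ₖ φ') (φ ⊗ₖ φ') 0 =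
      (f * g) • 1 := by
  have key : ∀ (A B : Matrix (Fin n) (Fin n) (MvPowerSeries (σ ⊕ τ) K)) (A' B' : Matrix (Fin m) (Fin m) (MvPowerSeries (σ ⊕ τ) K)),
      A * B = f • 1 → A' * B' = g • 1 →
      fromBlocks 0 (A ⊗ₖ A') (A ⊗ₖ A') 0 * fromBlocks 0 (B ⊗ₖ B') (B ⊗ₖ B') 0 =
        (f * g) • (1 : Matrix (Fin n × Fin m ⊕ Fin n × Fin m) _ _) := by
    intro A B A' B' hAB hAB'
    have hk : (A ⊗ₖ A') * (B ⊗ₖ B') = (f * g) • 1 := by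
      rw [← Matrix.mul_kronecker_mul, hAB, hAB', Matrix.smul_kronecker,
        Matrix.kronecker_smul, Matrix.one_kronecker_one, smul_smul]
    rw [Matrix.fromBlocks_multiply]
    simp [hk, ← Matrix.fromBlocks_one, Matrix.fromBlocks_smul]
  exact ⟨key _ _ _ _ h1 h3, key _ _ _ _ h2 h4⟩
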